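/- Let f : ℝⁿ → ℝ be twice continuously differentiable with ∇²f Lipschitz continuous with constant L_H in the operator norm. Let μ ∈ (0, 1), η ∈ (0, 1), β ∈ (0, 1), x ∈ ℝⁿ with x > 0 componentwise, and d ∈ ℝⁿ, d ≠ 0, with ‖X⁻¹X̄d‖∞ ≤ β. Define g = X̄(∇f(x) − μX⁻¹e) and H = X̄(∇²f(x) + μX⁻²)X̄. Suppose that gᵀd ≤ 0 and dᵀHd ≤ −‖d‖³. Then for every α ∈ (0, 1] with α < 3(1 − β)²/((L_H + η)(1 − β)² + (2 − β)), the sufficient-decrease condition holds: φ_μ(x + αX̄d) − φ_μ(x) < −(η/6)·α³‖d‖³. -/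

import Mathlib

open Matrix

/-- The Euclidean norm of a vector in `Fin n → ℝ`. -/
noncomputable def euclNorm {n : ℕ} (v : Fin n → ℝ) : ℝ := Real.sqrt (∑ i, (v i)^2)

/-- The operator norm (induced by the Euclidean norm) of a matrix. -/
noncomputable def opNorm {n : ℕ} (A : Matrix (Fin n) (Fin n) ℝ) : ℝ :=
  ‖Matrix.toEuclideanCLM (𝕜 := ℝ) A‖

/-- The continuous linear map `w ↦ ∑ i, v i * w i`. -/
noncomputable def dotCLM {n : ℕ} (v : Fin n → ℝ) : (Fin n → ℝ) →L[ℝ] ℝ :=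
  ∑ i, v i • (ContinuousLinearMap.proj i : (Fin n → ℝ) →L[ℝ] ℝ)

/-- The continuous linear map `w ↦ A *ᵥ w`. -/
noncomputable def mulVecCLM {n : ℕ} (A : Matrix (Fin n) (Fin n) ℝ) :
    (Fin n → ℝ) →L[ℝ] (Fin n → ℝ) :=
  LinearMap.toContinuousLinearMap A.mulVecLin

lemma dotCLM_apply {n : ℕ} (v w : Fin n → ℝ) : dotCLM v w = v ⬝ᵥ w := by
  simp [dotCLM, dotProduct, ContinuousLinearMap.sum_apply]

lemma mulVecCLM_apply {n : ℕ} (A : Matrix (Fin n) (Fin n) ℝ) (w : Fin n → ℝ) :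
    mulVecCLM A w = A *ᵥ w := rfl

lemma euclNorm_eq {n : ℕ} (v : Fin n → ℝ) :
    euclNorm v = ‖(WithLp.equiv 2 (Fin n → ℝ)).symm v‖ := by
  rw [EuclideanSpace.norm_eq]
  simp [euclNorm, sq_abs]

lemma euclNorm_nonneg {n : ℕ} (v : Fin n → ℝ) : 0 ≤ euclNorm v := Real.sqrt_nonneg _

lemma euclNorm_sq {n : ℕ} (v : Fin n → ℝ) : euclNorm v ^ 2 = ∑ i, (v i)^2 := by
  rw [euclNorm, Real.sq_sqrt]
  exact Finset.sum_nonneg fun i _ => sq_nonneg _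

lemma euclNorm_pos {n : ℕ} {v : Fin n → ℝ} (hv : v ≠ 0) : 0 < euclNorm v := by
  rw [euclNorm_eq]
  rw [norm_pos_iff]
  simpa using hv

lemma euclNorm_smul {n : ℕ} (c : ℝ) (v : Fin n → ℝ) :
    euclNorm (c • v) = |c| * euclNorm v := by
  simp only [euclNorm_eq]
  have : (WithLp.equiv 2 (Fin n → ℝ)).symm (c • v) = c • (WithLp.equiv 2 (Fin n → ℝ)).symm v := rfl
  rw [this, norm_smul, Real.norm_eq_abs]

lemma abs_le_euclNorm {n : ℕ} (v : Fin n → ℝ) (i : Fin n) : |v i| ≤ euclNorm v := by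
  rw [← Real.sqrt_sq_eq_abs, euclNorm]
  exact Real.sqrt_le_sqrt (Finset.single_le_sum (fun j _ => sq_nonneg (v j)) (Finset.mem_univ i))

lemma euclNorm_le {n : ℕ} {v w : Fin n → ℝ} (h : ∀ i, |v i| ≤ |w i|) :
    euclNorm v ≤ euclNorm w :=
  Real.sqrt_le_sqrt (Finset.sum_le_sum fun i _ => by
    rw [← sq_abs (v i), ← sq_abs (w i)]; exact pow_le_pow_left₀ (abs_nonneg _) (h i) 2)

lemma quad_abs_bound {n : ℕ} (A : Matrix (Fin n) (Fin n) ℝ) (v : Fin n → ℝ) :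
    |(A *ᵥ v) ⬝ᵥ v| ≤ opNorm A * euclNorm v ^ 2 := by
  set w := (WithLp.equiv 2 (Fin n → ℝ)).symm v with hw
  have h1 : (A *ᵥ v) ⬝ᵥ v = inner ℝ (Matrix.toEuclideanCLM (𝕜 := ℝ) A w) w := by
    rw [PiLp.inner_apply]
    simp [dotProduct, Matrix.mulVec, mul_comm, hw, Matrix.toLin'_apply]
  rw [h1, euclNorm_eq]
  calc |inner ℝ (Matrix.toEuclideanCLM (𝕜 := ℝ) A w) w| ≤ ‖Matrix.toEuclideanCLM (𝕜 := ℝ) A w‖ * ‖w‖ :=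
        abs_real_inner_le_norm _ _
    _ ≤ (opNorm A * ‖w‖) * ‖w‖ := by
        apply mul_le_mul_of_nonneg_right ((Matrix.toEuclideanCLM (𝕜 := ℝ) A).le_opNorm w) (norm_nonneg w)
    _ = opNorm A * ‖w‖ ^ 2 := by ring

lemma taylor_bound {n : ℕ}
    (f : (Fin n → ℝ) → ℝ)
    (gradf : (Fin n → ℝ) → (Fin n → ℝ))
    (hessf : (Fin n → ℝ) → Matrix (Fin n) (Fin n) ℝ)
    (hgrad : ∀ y : Fin n → ℝ, HasFDerivAt f (dotCLM (gradf y)) y)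
    (hhess : ∀ y : Fin n → ℝ, HasFDerivAt gradf (mulVecCLM (hessf y)) y)
    (L_H : ℝ)
    (hlip : ∀ y z : Fin n → ℝ, opNorm (hessf y - hessf z) ≤ L_H * euclNorm (y - z))
    (x s : Fin n → ℝ) :
    f (x + s) ≤ f x + gradf x ⬝ᵥ s + (1/2) * ((hessf x *ᵥ s) ⬝ᵥ s)
      + L_H/6 * euclNorm s ^ 3 := by
  set N := euclNorm s with hNdef
  have hN : 0 ≤ N := euclNorm_nonneg s
  set c : ℝ := (hessf x *ᵥ s) ⬝ᵥ s with hc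
  have hline : ∀ t : ℝ, HasDerivAt (fun t : ℝ => x + t • s) s t := by
    intro t
    simpa using ((hasDerivAt_id t).smul_const s).const_add x
  set q : ℝ → ℝ := fun t => gradf (x + t • s) ⬝ᵥ s with hq
  have hqd : ∀ t : ℝ, HasDerivAt q ((hessf (x + t • s) *ᵥ s) ⬝ᵥ s) t := by
    intro t
    have h1 : HasDerivAt (fun t : ℝ => gradf (x + t • s))
        (mulVecCLM (hessf (x + t • s)) s) t :=
      (hhess (x + t • s)).comp_hasDerivAt t (hline t)
    have h2 := (dotCLM s).hasFDerivAt.comp_hasDerivAt t h1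
    simp only [mulVecCLM_apply, dotCLM_apply] at h2
    have heq : (⇑(dotCLM s) ∘ fun t : ℝ => gradf (x + t • s)) = q := by
      funext τ; simp [hq, dotCLM_apply, dotProduct_comm]
    rw [heq] at h2
    rwa [dotProduct_comm] at h2
  have hfd : ∀ t : ℝ, HasDerivAt (fun t : ℝ => f (x + t • s)) (q t) t := by
    intro t
    have h2 := (hgrad (x + t • s)).comp_hasDerivAt t (hline t)
    simp [hq, dotCLM_apply] at h2 ⊢; exact h2
  -- hessian quadratic form bound along the segment
  have hquadbd : ∀ t : ℝ, 0 ≤ t →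
      (hessf (x + t • s) *ᵥ s) ⬝ᵥ s - c ≤ L_H * t * N ^ 3 := by
    intro t ht
    have h1 : (hessf (x + t • s) *ᵥ s) ⬝ᵥ s - c
        = ((hessf (x + t • s) - hessf x) *ᵥ s) ⬝ᵥ s := by
      rw [Matrix.sub_mulVec, sub_dotProduct, hc]
    rw [h1]
    calc ((hessf (x + t • s) - hessf x) *ᵥ s) ⬝ᵥ s
        ≤ |((hessf (x + t • s) - hessf x) *ᵥ s) ⬝ᵥ s| := le_abs_self _
      _ ≤ opNorm (hessf (x + t • s) - hessf x) * euclNorm s ^ 2 := quad_abs_bound _ _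
      _ ≤ (L_H * euclNorm (t • s)) * euclNorm s ^ 2 := by
          apply mul_le_mul_of_nonneg_right _ (sq_nonneg _)
          have := hlip (x + t • s) x
          simpa using this
      _ = L_H * t * N ^ 3 := by
          rw [euclNorm_smul, abs_of_nonneg ht, ← hNdef]; ring
  -- step 1 : q t - q 0 - t * c ≤ L_H/2 * t^2 * N^3 on [0,1]
  set u : ℝ → ℝ := fun t => L_H/2 * N^3 * t^2 - (q t - q 0 - c * t) with hu
  have hud : ∀ t : ℝ, HasDerivAt u
      (L_H/2 * N^3 * (2*t) - ((hessf (x + t • s) *ᵥ s) ⬝ᵥ s - c)) t := by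
    intro t
    have h1 : HasDerivAt (fun t : ℝ => L_H/2 * N^3 * t^2) (L_H/2 * N^3 * (2*t)) t := by
      simpa using (hasDerivAt_pow 2 t).const_mul (L_H/2 * N^3)
    have h2 : HasDerivAt (fun t : ℝ => q t - q 0 - c * t)
        ((hessf (x + t • s) *ᵥ s) ⬝ᵥ s - c) t := by
      have := ((hqd t).sub_const (q 0)).sub ((hasDerivAt_id t).const_mul c); rw [mul_one] at this; exact this
    exact h1.sub h2
  have humono : MonotoneOn u (Set.Icc 0 1) := by
    apply monotoneOn_of_deriv_nonneg (convex_Icc 0 1)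
    · exact fun t _ => ((hud t).differentiableAt).continuousAt.continuousWithinAt
    · exact fun t _ => ((hud t).differentiableAt).differentiableWithinAt
    · intro t ht
      rw [interior_Icc] at ht
      rw [(hud t).deriv]
      have := hquadbd t (le_of_lt ht.1)
      nlinarith [this]
  have hustep : ∀ t ∈ Set.Icc (0:ℝ) 1, q t - q 0 - c * t ≤ L_H/2 * N^3 * t^2 := by
    intro t ht
    have h0 : u 0 = 0 := by simp [hu]
    have := humono (Set.left_mem_Icc.mpr zero_le_one) ht ht.1
    rw [h0] at this
    simp only [hu] at this
    linarith
  -- step 2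
  set ρ : ℝ → ℝ := fun t => f (x + t • s) - f x - q 0 * t - c/2 * t^2 - L_H/6 * N^3 * t^3
    with hρ
  have hρd : ∀ t : ℝ, HasDerivAt ρ
      (q t - q 0 - c * t - L_H/2 * N^3 * t^2) t := by
    intro t
    have h1 : HasDerivAt (fun t : ℝ => f (x + t • s) - f x - q 0 * t - c/2 * t^2
        - L_H/6 * N^3 * t^3)
        (q t - (q 0 * 1) - c/2 * (2*t) - L_H/6 * N^3 * (3*t^2)) t := by
      refine HasDerivAt.sub (HasDerivAt.sub (HasDerivAt.sub ?_ ?_) ?_) ?_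
      · exact (hfd t).sub_const (f x)
      · simpa using ((hasDerivAt_id t).const_mul (q 0))
      · simpa using (hasDerivAt_pow 2 t).const_mul (c/2)
      · have h := (hasDerivAt_pow 3 t).const_mul (L_H/6 * N^3)
        have e : (↑(3:ℕ) : ℝ) * t ^ (3 - 1) = 3 * t^2 := by norm_num
        rw [e] at h
        exact h
    convert h1 using 1
    ring
  have hρanti : AntitoneOn ρ (Set.Icc 0 1) := by
    apply antitoneOn_of_deriv_nonpos (convex_Icc 0 1)
    · exact fun t _ => ((hρd t).differentiableAt).continuousAt.continuousWithinAt
    · exact fun t _ => ((hρd t).differentiableAt).differentiableWithinAt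
    · intro t ht
      rw [interior_Icc] at ht
      rw [(hρd t).deriv]
      have := hustep t ⟨le_of_lt ht.1, le_of_lt ht.2⟩
      linarith
  have h01 : ρ 1 ≤ ρ 0 :=
    hρanti (Set.left_mem_Icc.mpr zero_le_one) (Set.right_mem_Icc.mpr zero_le_one) zero_le_one
  have hρ0 : ρ 0 = 0 := by simp [hρ]
  have hρ1 : ρ 1 = f (x + s) - f x - q 0 - c/2 - L_H/6 * N^3 := by
    simp [hρ]
  have hq0 : q 0 = gradf x ⬝ᵥ s := by simp [hq]
  rw [hρ0, hρ1, hq0] at h01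
  linarith

lemma log_taylor_bound {t b : ℝ} (hb : b < 1) (ht : |t| ≤ b) :
    -Real.log (1 + t) + t - t^2/2 ≤ |t|^3 / (3*(1-b)) := by
  have hb0 : 0 ≤ b := le_trans (abs_nonneg t) ht
  have habs : |(-t)| < 1 := by rw [abs_neg]; exact lt_of_le_of_lt ht hb
  have htlt : |t| < 1 := lt_of_le_of_lt ht hb
  have hS := Real.hasSum_pow_div_log_of_abs_lt_one habs
  have h1t : (1 : ℝ) - -t = 1 + t := by ring
  rw [h1t] at hS
  have htail0 := (hasSum_nat_add_iff'
      (f := fun k : ℕ => (-t)^(k+1)/((k:ℝ)+1)) 2).mpr hS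
  have hval : -Real.log (1+t) - ∑ i ∈ Finset.range 2, (-t)^(i+1)/((i:ℝ)+1)
      = -Real.log (1+t) + t - t^2/2 := by
    rw [Finset.sum_range_succ, Finset.sum_range_one]
    push_cast
    ring
  rw [hval] at htail0
  have hfun : (fun n : ℕ => (-t)^(n+2+1)/(((n+2:ℕ):ℝ)+1))
      = fun n : ℕ => (-t)^(n+2+1)/((n:ℝ)+2+1) := by
    funext n; push_cast; ring_nf
  have htail : HasSum (fun k : ℕ => (-t)^(k+2+1)/((k:ℝ)+2+1))
      (-Real.log (1 + t) + t - t^2/2) := by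
    rwa [hfun] at htail0
  have hgeo : HasSum (fun k : ℕ => |t|^3/3 * |t|^k) (|t|^3/3 * (1-|t|)⁻¹) :=
    (hasSum_geometric_of_lt_one (abs_nonneg t) htlt).mul_left _
  have hle : -Real.log (1 + t) + t - t^2/2 ≤ |t|^3/3 * (1-|t|)⁻¹ := by
    refine hasSum_le (fun k => ?_) htail hgeo
    have habs2 : (-t)^(k+2+1) ≤ |t|^(k+2+1) := by
      calc (-t)^(k+2+1) ≤ |(-t)^(k+2+1)| := le_abs_self _
        _ = |t|^(k+2+1) := by rw [abs_pow, abs_neg]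
    calc (-t)^(k+2+1)/((k:ℝ)+2+1) ≤ |t|^(k+2+1)/((k:ℝ)+2+1) := by
          have hden : (0:ℝ) < (k:ℝ)+2+1 := by positivity
          exact div_le_div_of_nonneg_right habs2 hden.le |>.trans_eq rfl
      _ ≤ |t|^(k+2+1)/3 := by
          gcongr
          all_goals first
            | positivity
            | linarith [Nat.cast_nonneg (α := ℝ) k]
      _ = |t|^3/3 * |t|^k := by
          rw [show k+2+1 = 3+k from by ring, pow_add]; ring
  refine hle.trans ?_
  have h3 : (1-|t|)⁻¹ ≤ (1-b)⁻¹ := by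
    apply inv_anti₀ (by linarith) (by linarith)
  have h4 : |t|^3/3 * (1-|t|)⁻¹ ≤ |t|^3/3 * (1-b)⁻¹ :=
    mul_le_mul_of_nonneg_left h3 (by positivity)
  refine h4.trans_eq ?_
  have hbne : (1:ℝ) - b ≠ 0 := by intro h; linarith [h]
  field_simp

/-- with `f` twice continuously differentiable, Hessian `L_H`-Lipschitz in
operator norm, `μ, η, β ∈ (0,1)`, `x > 0`, `d ≠ 0` with `‖X⁻¹X̄d‖∞ ≤ β`,
`g = X̄(∇f(x) − μX⁻¹e)`, `H = X̄(∇²f(x) + μX⁻²)X̄`, and suppose `gᵀd ≤ 0` and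
`dᵀHd ≤ −‖d‖³`. Then for every `α ∈ (0,1]` with
`α < 3(1−β)²/((L_H + η)(1−β)² + (2−β))`, the sufficient-decrease condition holds:
`φ_μ(x + αX̄d) − φ_μ(x) < −(η/6)α³‖d‖³`. -/
theorem stmt12 {n : ℕ}
    (f : (Fin n → ℝ) → ℝ)
    (gradf : (Fin n → ℝ) → (Fin n → ℝ))
    (hessf : (Fin n → ℝ) → Matrix (Fin n) (Fin n) ℝ)
    (hgrad : ∀ y : Fin n → ℝ, HasFDerivAt f (dotCLM (gradf y)) y)
    (hhess : ∀ y : Fin n → ℝ, HasFDerivAt gradf (mulVecCLM (hessf y)) y)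
    (hhesscont : Continuous hessf)
    (L_H : ℝ) (hLH : 0 ≤ L_H)
    (hlip : ∀ y z : Fin n → ℝ, opNorm (hessf y - hessf z) ≤ L_H * euclNorm (y - z))
    (μ : ℝ) (hμ : μ ∈ Set.Ioo (0:ℝ) 1)
    (η : ℝ) (hη : η ∈ Set.Ioo (0:ℝ) 1)
    (β : ℝ) (hβ : β ∈ Set.Ioo (0:ℝ) 1)
    (x : Fin n → ℝ) (hx : ∀ i, 0 < x i)
    (d : Fin n → ℝ) (hdne : d ≠ 0)
    (hd : ‖(fun i => (min (x i) 1 / x i) * d i : Fin n → ℝ)‖ ≤ β)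
    (g : Fin n → ℝ)
    (hg : g = fun i => min (x i) 1 * (gradf x i - μ / x i))
    (H : Matrix (Fin n) (Fin n) ℝ)
    (hH : H = Matrix.diagonal (fun i => min (x i) 1)
        * (hessf x + μ • Matrix.diagonal (fun i => ((x i)^2)⁻¹))
        * Matrix.diagonal (fun i => min (x i) 1))
    (hgd : g ⬝ᵥ d ≤ 0)
    (hcurv : d ⬝ᵥ (H *ᵥ d) ≤ -(euclNorm d ^ 3)) :
    ∀ α ∈ Set.Ioc (0:ℝ) 1,
      α < 3 * (1-β)^2 / ((L_H + η) * (1-β)^2 + (2-β)) →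
      f (x + α • (fun i => min (x i) 1 * d i : Fin n → ℝ))
          - μ * ∑ i, Real.log ((x + α • (fun i => min (x i) 1 * d i : Fin n → ℝ)) i)
        - (f x - μ * ∑ i, Real.log (x i))
        < -(η/6) * α^3 * euclNorm d ^ 3 := by
  intro α hα hαlt
  obtain ⟨hα0, hα1⟩ := hα
  obtain ⟨hμ0, hμ1⟩ := hμ
  obtain ⟨hη0, hη1⟩ := hη
  obtain ⟨hβ0, hβ1⟩ := hβ
  have h1β : (0:ℝ) < 1 - β := by linarith only [hβ1]
  set e : Fin n → ℝ := fun i => min (x i) 1 * d i with he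
  set r : Fin n → ℝ := fun i => (min (x i) 1 / x i) * d i with hr
  set N : ℝ := euclNorm d with hNdef
  have hN : 0 < N := euclNorm_pos hdne
  have hxb0 : ∀ i, 0 < min (x i) 1 := fun i => lt_min (hx i) one_pos
  have hxb1 : ∀ i, min (x i) 1 ≤ 1 := fun i => min_le_right _ _
  have hxble : ∀ i, min (x i) 1 ≤ x i := fun i => min_le_left _ _
  -- componentwise bound on r
  have hri : ∀ i, |r i| ≤ β := by
    intro i
    have h1 := norm_le_pi_norm r i
    rw [Real.norm_eq_abs] at h1
    exact le_trans h1 hd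
  have hti : ∀ i, |α * r i| ≤ β := by
    intro i
    rw [abs_mul, abs_of_pos hα0]
    calc α * |r i| ≤ 1 * β := by
          apply mul_le_mul hα1 (hri i) (abs_nonneg _) zero_le_one
      _ = β := one_mul β
  have h1t : ∀ i, 0 < 1 + α * r i := by
    intro i
    have h2 := abs_le.mp (hti i)
    linarith only [h2.1, hβ1]
  -- expansion of the shifted point
  have hxs : ∀ i, (x + α • e) i = x i * (1 + α * r i) := by
    intro i
    simp only [he, hr, Pi.add_apply, Pi.smul_apply, smul_eq_mul]
    have hxne : x i ≠ 0 := (hx i).ne'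
    field_simp
  have hlogsplit : ∑ i, Real.log ((x + α • e) i)
      = ∑ i, Real.log (x i) + ∑ i, Real.log (1 + α * r i) := by
    rw [← Finset.sum_add_distrib]
    apply Finset.sum_congr rfl
    intro i _
    rw [hxs i, Real.log_mul (hx i).ne' (h1t i).ne']
  -- sums
  set T1 : ℝ := ∑ i, α * r i with hT1
  set T2 : ℝ := ∑ i, (α * r i)^2 with hT2
  set T3 : ℝ := ∑ i, |α * r i|^3 with hT3
  set Q : ℝ := (hessf x *ᵥ (α • e)) ⬝ᵥ (α • e) with hQ
  -- Taylor bound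
  have htaylor : f (x + α • e) ≤ f x + gradf x ⬝ᵥ (α • e) + (1/2) * Q
      + L_H/6 * euclNorm (α • e) ^ 3 :=
    taylor_bound f gradf hessf hgrad hhess L_H hlip x (α • e)
  -- log bound
  have hlogsum : ∑ i, (-Real.log (1 + α * r i))
      ≤ -T1 + T2/2 + T3/(3*(1-β)) := by
    have h := Finset.sum_le_sum (s := Finset.univ) (f := fun i => -Real.log (1 + α * r i))
      (g := fun i => -(α * r i) + (α * r i)^2/2 + |α * r i|^3/(3*(1-β)))
      (fun i _ => by
        have := log_taylor_bound hβ1 (hti i)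
        linarith only [this])
    refine h.trans_eq ?_
    rw [hT1, hT2, hT3, Finset.sum_add_distrib, Finset.sum_add_distrib,
      Finset.sum_neg_distrib, ← Finset.sum_div, ← Finset.sum_div]
  have hμlog : -(μ * ∑ i, Real.log (1 + α * r i))
      ≤ -(μ*T1) + μ*T2/2 + μ*(T3/(3*(1-β))) := by
    have hsn : -(∑ i, Real.log (1 + α * r i)) = ∑ i, (-Real.log (1 + α * r i)) := by
      rw [Finset.sum_neg_distrib]
    have h := mul_le_mul_of_nonneg_left hlogsum hμ0.le
    have he1 : μ * (∑ i, (-Real.log (1 + α * r i)))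
        = -(μ * ∑ i, Real.log (1 + α * r i)) := by
      rw [← hsn]; ring
    have he2 : μ * (-T1 + T2/2 + T3/(3*(1-β)))
        = -(μ*T1) + μ*T2/2 + μ*(T3/(3*(1-β))) := by ring
    rw [he1, he2] at h
    exact h
  -- first-order identity
  have hS1 : gradf x ⬝ᵥ (α • e) - μ * T1 = α * (g ⬝ᵥ d) := by
    rw [hg, hT1, dotProduct, dotProduct, Finset.mul_sum, Finset.mul_sum,
      ← Finset.sum_sub_distrib]
    apply Finset.sum_congr rfl
    intro i _
    simp only [he, hr, Pi.smul_apply, smul_eq_mul]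
    have hxne : x i ≠ 0 := (hx i).ne'
    field_simp
  -- second-order identity
  have hS2 : Q + μ * T2 = α^2 * (d ⬝ᵥ (H *ᵥ d)) := by
    have hHdd : d ⬝ᵥ (H *ᵥ d)
        = (hessf x *ᵥ e) ⬝ᵥ e + μ * ∑ i, (r i)^2 := by
      rw [hH]
      have hDi : ∀ (v w : Fin n → ℝ), Matrix.diagonal v *ᵥ w = fun i => v i * w i :=
        fun v w => funext fun i => Matrix.mulVec_diagonal v w i
      rw [← Matrix.mulVec_mulVec, ← Matrix.mulVec_mulVec, hDi, Matrix.add_mulVec,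
        Matrix.smul_mulVec, hDi, hDi]
      rw [dotProduct_comm (hessf x *ᵥ e), dotProduct, dotProduct, Finset.mul_sum,
        ← Finset.sum_add_distrib]
      apply Finset.sum_congr rfl
      intro i _
      simp only [he, hr, Pi.add_apply, Pi.smul_apply, smul_eq_mul, Matrix.mulVec]
      have hxne : x i ≠ 0 := (hx i).ne'
      field_simp
    have hQ2 : Q = α^2 * ((hessf x *ᵥ e) ⬝ᵥ e) := by
      rw [hQ, Matrix.mulVec_smul, smul_dotProduct, dotProduct_smul,
        smul_eq_mul, smul_eq_mul]
      ring
    have hT2' : T2 = α^2 * ∑ i, (r i)^2 := by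
      rw [hT2, Finset.mul_sum]
      exact Finset.sum_congr rfl fun i _ => by ring
    rw [hQ2, hT2', hHdd]
    ring
  -- key combined bound
  have hkey : f (x + α • e) - μ * ∑ i, Real.log ((x + α • e) i)
      - (f x - μ * ∑ i, Real.log (x i))
      ≤ α * (g ⬝ᵥ d) + α^2/2 * (d ⬝ᵥ (H *ᵥ d))
        + L_H/6 * euclNorm (α • e) ^ 3 + μ*(T3/(3*(1-β))) := by
    rw [hlogsplit]
    linarith only [htaylor, hμlog, hS1, hS2]
  -- norm bounds
  have hse : euclNorm (α • e) ≤ α * N := by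
    rw [euclNorm_smul, abs_of_pos hα0]
    have hee : euclNorm e ≤ N := by
      apply euclNorm_le
      intro i
      simp only [he]
      rw [abs_mul, abs_of_pos (hxb0 i)]
      calc min (x i) 1 * |d i| ≤ 1 * |d i| :=
            mul_le_mul_of_nonneg_right (hxb1 i) (abs_nonneg _)
        _ = |d i| := one_mul _
    exact mul_le_mul_of_nonneg_left hee hα0.le
  have hcube : L_H/6 * euclNorm (α • e) ^ 3 ≤ L_H/6 * (α^3 * N^3) := by
    have h0 : 0 ≤ euclNorm (α • e) := euclNorm_nonneg _
    have h1 : euclNorm (α • e) ^ 3 ≤ (α*N)^3 := pow_le_pow_left₀ h0 hse 3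
    have h2 : (α*N)^3 = α^3*N^3 := by ring
    rw [h2] at h1
    exact mul_le_mul_of_nonneg_left h1 (by linarith only [hLH])
  -- cubic sum bound
  have hd3 : ∑ i, |d i|^3 ≤ N^3 := by
    have h1 : ∀ i, |d i|^3 ≤ (d i)^2 * N := by
      intro i
      have h2 : |d i|^3 = (d i)^2 * |d i| := by
        rw [pow_succ, sq_abs]
      rw [h2]
      exact mul_le_mul_of_nonneg_left (abs_le_euclNorm d i) (sq_nonneg _)
    calc ∑ i, |d i|^3 ≤ ∑ i, (d i)^2 * N := Finset.sum_le_sum (fun i _ => h1 i)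
      _ = (∑ i, (d i)^2) * N := by rw [Finset.sum_mul]
      _ = N^2 * N := by rw [← euclNorm_sq, ← hNdef]
      _ = N^3 := by ring
  have hT3bd : T3 ≤ α^3 * N^3 := by
    have h1 : ∀ i, |α * r i|^3 ≤ α^3 * |d i|^3 := by
      intro i
      have hrd : |r i| ≤ |d i| := by
        simp only [hr]
        rw [abs_mul]
        have h2 : |min (x i) 1 / x i| ≤ 1 := by
          rw [abs_of_pos (div_pos (hxb0 i) (hx i))]
          exact (div_le_one (hx i)).mpr (hxble i)
        calc |min (x i) 1 / x i| * |d i| ≤ 1 * |d i| :=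
              mul_le_mul_of_nonneg_right h2 (abs_nonneg _)
          _ = |d i| := one_mul _
      rw [abs_mul, abs_of_pos hα0, mul_pow]
      exact mul_le_mul_of_nonneg_left
        (pow_le_pow_left₀ (abs_nonneg _) hrd 3) (by positivity)
    calc T3 ≤ ∑ i, α^3 * |d i|^3 := by
          rw [hT3]; exact Finset.sum_le_sum (fun i _ => h1 i)
      _ = α^3 * ∑ i, |d i|^3 := by rw [Finset.mul_sum]
      _ ≤ α^3 * N^3 := mul_le_mul_of_nonneg_left hd3 (by positivity)
  have hT3nn : 0 ≤ T3 := by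
    rw [hT3]
    exact Finset.sum_nonneg fun i _ => by positivity
  have hb5 : μ*(T3/(3*(1-β))) ≤ (α^3*N^3)/(3*(1-β)) := by
    have hD : (0:ℝ) < 3*(1-β) := by linarith only [h1β]
    calc μ*(T3/(3*(1-β))) ≤ 1*(T3/(3*(1-β))) :=
          mul_le_mul_of_nonneg_right hμ1.le (div_nonneg hT3nn hD.le)
      _ = T3/(3*(1-β)) := one_mul _
      _ ≤ (α^3*N^3)/(3*(1-β)) := div_le_div_of_nonneg_right hT3bd hD.le
  -- bounds on first two terms
  have hb1 : α * (g ⬝ᵥ d) ≤ 0 := by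
    have := mul_le_mul_of_nonneg_left hgd hα0.le
    simpa using this
  have hb2 : α^2/2 * (d ⬝ᵥ (H *ᵥ d)) ≤ α^2/2 * (-(N^3)) :=
    mul_le_mul_of_nonneg_left hcurv (by positivity)
  -- final arithmetic
  have hden : (0:ℝ) < (L_H + η) * (1-β)^2 + (2-β) := by
    have hprod : (0:ℝ) ≤ (L_H + η) * (1-β)^2 :=
      mul_nonneg (by linarith only [hLH, hη0]) (sq_nonneg _)
    linarith only [hprod, hβ1]
  have hstep : α * ((L_H + η) * (1-β)^2 + (2-β)) < 3*(1-β)^2 := by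
    rw [lt_div_iff₀ hden] at hαlt
    exact hαlt
  have key2 : α*(L_H+η)*(1-β) + 2*α < 3*(1-β) := by
    have h5 : (α*(L_H+η)*(1-β) + 2*α) * (1-β) < (3*(1-β)) * (1-β) := by
      nlinarith only [hstep, mul_nonneg hα0.le hβ0.le]
    exact lt_of_mul_lt_mul_right h5 h1β.le
  have hDpos : (0:ℝ) < 3*(1-β) := by linarith only [h1β]
  have h7 : α^3*N^3 < (-(η/6)*(α^3*N^3) - α^2/2*(-(N^3)) - L_H/6*(α^3*N^3)) * (3*(1-β)) := by
    nlinarith only [mul_lt_mul_of_pos_right key2 (show (0:ℝ) < α^2*N^3/2 by positivity)]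
  have h8 : (α^3*N^3)/(3*(1-β))
      < -(η/6)*(α^3*N^3) - α^2/2*(-(N^3)) - L_H/6*(α^3*N^3) :=
    (div_lt_iff₀ hDpos).mpr h7
  linarith only [hkey, hb1, hb2, hcube, hb5, h8]
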